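/- For n ≥ 2 and k ≥ 1, the number of ordered sequences (λ₁,...,λ_k) where λ_i is a left-combed 'Lie monomial' of arity m_i (counted by (m_i − 1)! for each arity), placed in a shuffle tree of type (m₁,...,m_k) with m₁+...+m_k = n, m_i ≥ 1, m_k ≥ 2, equals Σ_{m₁+...+m_k=n, m_k≥2} (m₁−1)!···(m_k−1)! · m₁···m_k /((m₁+...+m_k)(m₂+...+m_k)···m_k) · multinomial(n; m₁,...,m_k), and this equals (n−1)! times the elementary symmetric polynomial e_{k−1}(1/2, 1/3, ..., 1/(n−1)). -/

import Mathlib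

/-!
Statement 15.  For `n ≥ 2`, `k ≥ 1`, the weighted count of sequences of left-combed
Lie monomials placed in shuffle trees of type `(m₁,…,m_k)`:
  Σ over `m₁+…+m_k = n`, `m_i ≥ 1`, `m_k ≥ 2` of
    `(m₁-1)!⋯(m_k-1)! · m₁⋯m_k / ((m₁+…+m_k)(m₂+…+m_k)⋯m_k) · n!/(m₁!⋯m_k!)`
equals `(n-1)! · e_{k-1}(1/2, 1/3, …, 1/(n-1))`.
-/

open Finset

namespace LieAux15

/-- suffix sums -/
def Sf (k : ℕ) (m : Fin k → ℕ) (i : ℕ) : ℕ :=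
  ∑ j ∈ Finset.univ.filter (fun j : Fin k => i ≤ (j : ℕ)), m j

lemma Sf_zero {k : ℕ} (m : Fin k → ℕ) : Sf k m 0 = ∑ i, m i := by
  simp [Sf]

lemma Sf_of_le {k : ℕ} (m : Fin k → ℕ) {i : ℕ} (h : k ≤ i) : Sf k m i = 0 := by
  rw [Sf, Finset.filter_false_of_mem, Finset.sum_empty]
  intro j _
  have := j.isLt
  omega

lemma Sf_succ {k : ℕ} (m : Fin k → ℕ) {i : ℕ} (h : i < k) :
    Sf k m i = m ⟨i, h⟩ + Sf k m (i + 1) := by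
  rw [Sf, Sf]
  have hins : Finset.univ.filter (fun j : Fin k => i ≤ (j : ℕ)) =
      insert ⟨i, h⟩ (Finset.univ.filter (fun j : Fin k => i + 1 ≤ (j : ℕ))) := by
    ext j
    simp only [mem_filter, mem_univ, true_and, mem_insert, Fin.ext_iff]
    omega
  rw [hins, Finset.sum_insert (by simp)]

lemma Sf_anti {k : ℕ} (m : Fin k → ℕ) : Antitone (Sf k m) := by
  intro a b hab
  apply Finset.sum_le_sum_of_subset
  intro j hj
  simp only [mem_filter, mem_univ, true_and] at hj ⊢
  omega

lemma Sf_lt {k : ℕ} {m : Fin k → ℕ} (hm : ∀ j, 1 ≤ m j) {a b : ℕ} (hab : a < b) (hb : b ≤ k) :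
    Sf k m b < Sf k m a := by
  have h1 : Sf k m b ≤ Sf k m (a + 1) := Sf_anti m hab
  have h2 : Sf k m a = m ⟨a, by omega⟩ + Sf k m (a + 1) := Sf_succ m (by omega)
  have := hm ⟨a, by omega⟩
  omega

/-- inverse construction: decreasing enumeration -/
def gf (n k : ℕ) (S : Finset ℕ) (i : ℕ) : ℕ :=
  if i = 0 then n else if i ≤ k - 1 then (S.sort (· ≤ ·)).getD (k - 1 - i) 0 else 0

def mf (n k : ℕ) (S : Finset ℕ) : Fin k → ℕ := fun i => gf n k S i - gf n k S (i + 1)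

lemma gf_zero {n k : ℕ} {S : Finset ℕ} : gf n k S 0 = n := by simp [gf]

lemma gf_of_ge {n k : ℕ} {S : Finset ℕ} (hk : 1 ≤ k) {i : ℕ} (h : k ≤ i) : gf n k S i = 0 := by
  rw [gf, if_neg (by omega), if_neg (by omega)]

lemma gf_mem {n k : ℕ} {S : Finset ℕ} (hcard : S.card = k - 1) {i : ℕ}
    (h1 : 1 ≤ i) (h2 : i ≤ k - 1) : gf n k S i ∈ S := by
  have hlen : (S.sort (· ≤ ·)).length = k - 1 := by simp [hcard]
  have hidx : k - 1 - i < (S.sort (· ≤ ·)).length := by omega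
  rw [gf, if_neg (by omega), if_pos h2, List.getD_eq_getElem _ _ hidx]
  exact (Finset.mem_sort _).mp (List.getElem_mem hidx)

lemma gf_eq_get {n k : ℕ} {S : Finset ℕ} (hcard : S.card = k - 1) {i : ℕ}
    (h1 : 1 ≤ i) (h2 : i ≤ k - 1) (hidx : k - 1 - i < (S.sort (· ≤ ·)).length) :
    gf n k S i = (S.sort (· ≤ ·))[k - 1 - i] := by
  rw [gf, if_neg (by omega), if_pos h2, List.getD_eq_getElem _ _ hidx]

lemma gf_lt_gf {n k : ℕ} {S : Finset ℕ} (hn : 2 ≤ n) (hk : 1 ≤ k)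
    (hS : S ⊆ Finset.Icc 2 (n - 1)) (hcard : S.card = k - 1) {i : ℕ} (h : i < k) :
    gf n k S (i + 1) < gf n k S i := by
  have hlen : (S.sort (· ≤ ·)).length = k - 1 := by simp [hcard]
  rcases Nat.eq_zero_or_pos i with rfl | hi
  · -- g 1 < g 0 = n
    rw [gf_zero]
    simp only [Nat.zero_add]
    by_cases h1 : 1 ≤ k - 1
    · have := hS (gf_mem (n := n) hcard le_rfl h1)
      rw [Finset.mem_Icc] at this
      omega
    · rw [gf, if_neg (by omega), if_neg (by omega)]; omega
  · by_cases h2 : i + 1 ≤ k - 1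
    · have hidx1 : k - 1 - (i + 1) < (S.sort (· ≤ ·)).length := by omega
      have hidx2 : k - 1 - i < (S.sort (· ≤ ·)).length := by omega
      rw [gf_eq_get hcard (by omega) h2 hidx1, gf_eq_get hcard (by omega) (by omega) hidx2]
      have := S.sortedLT_sort.strictMono_get
        (show (⟨k - 1 - (i + 1), hidx1⟩ : Fin _) < ⟨k - 1 - i, hidx2⟩ by
          simp [Fin.lt_def]; omega)
      simpa using this
    · -- i = k-1, g (i+1) = 0 < g i (∈ S so ≥ 2)
      rw [gf_of_ge hk (by omega)]
      have := hS (gf_mem (n := n) hcard hi (by omega))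
      rw [Finset.mem_Icc] at this
      omega

lemma gf_le_gf {n k : ℕ} {S : Finset ℕ} (hn : 2 ≤ n) (hk : 1 ≤ k)
    (hS : S ⊆ Finset.Icc 2 (n - 1)) (hcard : S.card = k - 1) (i : ℕ) :
    gf n k S (i + 1) ≤ gf n k S i := by
  by_cases h : i < k
  · exact (gf_lt_gf hn hk hS hcard h).le
  · rw [gf_of_ge hk (by omega)]; omega

lemma gf_le_n {n k : ℕ} {S : Finset ℕ} (hn : 2 ≤ n)
    (hS : S ⊆ Finset.Icc 2 (n - 1)) (hcard : S.card = k - 1) (i : ℕ) :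
    gf n k S i ≤ n := by
  rcases Nat.eq_zero_or_pos i with rfl | hi
  · rw [gf_zero]
  · by_cases h2 : i ≤ k - 1
    · have := hS (gf_mem (n := n) hcard hi h2)
      rw [Finset.mem_Icc] at this
      omega
    · rw [gf, if_neg (by omega), if_neg (by omega)]; omega

lemma Sf_mf {n k : ℕ} {S : Finset ℕ} (hn : 2 ≤ n) (hk : 1 ≤ k)
    (hS : S ⊆ Finset.Icc 2 (n - 1)) (hcard : S.card = k - 1) (i : ℕ) :
    Sf k (mf n k S) i = gf n k S i := by
  have key : ∀ t i, k ≤ i + t → Sf k (mf n k S) i = gf n k S i := by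
    intro t
    induction t with
    | zero =>
      intro i hi
      rw [Sf_of_le _ (by omega), gf_of_ge hk (by omega)]
    | succ t ih =>
      intro i hi
      by_cases hik : k ≤ i
      · rw [Sf_of_le _ hik, gf_of_ge hk hik]
      · have hik' : i < k := by omega
        rw [Sf_succ _ hik']
        have h1 := ih (i + 1) (by omega)
        have h2 := gf_le_gf hn hk hS hcard i
        simp only [mf]
        omega
  exact key k i (by omega)

end LieAux15


open Finset LieAux15

theorem lie_monomial_count_eq_elementary_symmetric (n k : ℕ) (hn : 2 ≤ n) (hk : 1 ≤ k) :
    (∑ m ∈ (Fintype.piFinset fun _ : Fin k => Finset.range (n + 1)) |>.filter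
        (fun m : Fin k → ℕ =>
          (∑ i, m i) = n ∧ (∀ i, 1 ≤ m i) ∧ 2 ≤ m ⟨k - 1, by omega⟩),
      (∏ i : Fin k, ((Nat.factorial (m i - 1) : ℕ) : ℚ)) *
        (∏ i : Fin k, (m i : ℚ)) /
        (∏ i ∈ Finset.range k,
          ((∑ j ∈ Finset.univ.filter (fun j : Fin k => i ≤ (j : ℕ)), m j : ℕ) : ℚ)) *
        (((Nat.factorial n : ℕ) : ℚ) / ∏ i : Fin k, ((Nat.factorial (m i) : ℕ) : ℚ))) =
    ((Nat.factorial (n - 1) : ℕ) : ℚ) *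
      ∑ S ∈ (Finset.Icc 2 (n - 1)).powersetCard (k - 1), ∏ j ∈ S, (1 / (j : ℚ)) := by
  rw [Finset.mul_sum]
  refine Finset.sum_nbij' (fun m => (Finset.Ico 1 k).image (Sf k m))
    (fun S => mf n k S) ?_ ?_ ?_ ?_ ?_
  -- forward map lands in powersetCard
  · intro m hm
    obtain ⟨-, hsum, hone, hlast⟩ := Finset.mem_filter.mp hm
    have hS0 : Sf k m 0 = n := by rw [Sf_zero]; exact hsum
    have hSlast : 2 ≤ Sf k m (k - 1) := by
      rw [Sf_succ m (show k - 1 < k by omega), Sf_of_le m (show k ≤ k - 1 + 1 by omega)]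
      simpa using hlast
    have hge2 : ∀ i, i ≤ k - 1 → 2 ≤ Sf k m i := fun i hi => le_trans hSlast (Sf_anti m hi)
    have hle1 : ∀ i, 1 ≤ i → i ≤ k - 1 → Sf k m i ≤ n - 1 := by
      intro i h1 h2
      have := Sf_lt hone (show 0 < i by omega) (by omega)
      omega
    rw [Finset.mem_powersetCard]
    constructor
    · intro a ha
      rw [Finset.mem_image] at ha
      obtain ⟨i, hi, rfl⟩ := ha
      rw [Finset.mem_Ico] at hi
      rw [Finset.mem_Icc]
      exact ⟨hge2 i (by omega), hle1 i hi.1 (by omega)⟩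
    · rw [Finset.card_image_of_injOn, Nat.card_Ico]
      intro a ha b hb hab
      rw [Finset.mem_coe, Finset.mem_Ico] at ha hb
      by_contra hne
      rcases Nat.lt_or_ge a b with h | h
      · have := Sf_lt hone h (by omega); omega
      · have := Sf_lt hone (show b < a by omega) (by omega); omega
  -- inverse map lands in the composition set
  · intro S hSt
    beta_reduce
    rw [Finset.mem_powersetCard] at hSt
    obtain ⟨hsub, hcard⟩ := hSt
    have hsf := Sf_mf (S := S) hn hk hsub hcard
    rw [Finset.mem_filter]
    refine ⟨?_, ?_, ?_, ?_⟩
    · rw [Fintype.mem_piFinset]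
      intro i
      rw [Finset.mem_range]
      have h1 := gf_le_n (k := k) hn hsub hcard (i : ℕ)
      have h2 : mf n k S i ≤ gf n k S (i : ℕ) := Nat.sub_le _ _
      omega
    · rw [← Sf_zero (mf n k S), hsf 0, gf_zero]
    · intro i
      have := gf_lt_gf hn hk hsub hcard i.isLt
      simp only [mf]
      omega
    · show 2 ≤ gf n k S (k - 1) - gf n k S (k - 1 + 1)
      have h0 : gf n k S (k - 1 + 1) = 0 := gf_of_ge hk (by omega)
      rcases Nat.lt_or_ge 1 k with hk2 | hk2
      · have := hsub (gf_mem (n := n) hcard (i := k - 1) (by omega) (by omega))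
        rw [Finset.mem_Icc] at this
        omega
      · have hk1 : k = 1 := by omega
        subst hk1
        show 2 ≤ gf n 1 S 0 - gf n 1 S 1
        rw [gf_zero, gf_of_ge le_rfl le_rfl]
        omega
  -- left inverse
  · intro m hm
    beta_reduce
    obtain ⟨-, hsum, hone, hlast⟩ := Finset.mem_filter.mp hm
    have hS0 : Sf k m 0 = n := by rw [Sf_zero]; exact hsum
    have hTcard : ((Finset.Ico 1 k).image (Sf k m)).card = k - 1 := by
      rw [Finset.card_image_of_injOn, Nat.card_Ico]
      intro a ha b hb hab
      rw [Finset.mem_coe, Finset.mem_Ico] at ha hb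
      by_contra hne
      rcases Nat.lt_or_ge a b with h | h
      · have := Sf_lt hone h (by omega); omega
      · have := Sf_lt hone (show b < a by omega) (by omega); omega
    have hfm : ∀ x : Fin (k - 1),
        (fun j : Fin (k - 1) => Sf k m (k - 1 - (j : ℕ))) x ∈ (Finset.Ico 1 k).image (Sf k m) := by
      intro j
      rw [Finset.mem_image]
      refine ⟨k - 1 - (j : ℕ), ?_, rfl⟩
      rw [Finset.mem_Ico]
      have := j.isLt
      omega
    have hmono : StrictMono (fun j : Fin (k - 1) => Sf k m (k - 1 - (j : ℕ))) := by
      intro a b hab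
      have ha := a.isLt
      have hb := b.isLt
      rw [Fin.lt_def] at hab
      exact Sf_lt hone (by omega) (by omega)
    have huniq := Finset.orderEmbOfFin_unique hTcard hfm hmono
    have hgT : ∀ i, gf n k ((Finset.Ico 1 k).image (Sf k m)) i = Sf k m i := by
      intro i
      rcases Nat.eq_zero_or_pos i with rfl | h1
      · rw [gf_zero]; exact hS0.symm
      by_cases h2 : i ≤ k - 1
      · have hlenT : (((Finset.Ico 1 k).image (Sf k m)).sort (· ≤ ·)).length = k - 1 := by
          simp [hTcard]
        have hidx : k - 1 - i < (((Finset.Ico 1 k).image (Sf k m)).sort (· ≤ ·)).length := by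
          omega
        rw [gf_eq_get hTcard h1 h2 hidx]
        have h3 := congrFun huniq ⟨k - 1 - i, by omega⟩
        rw [Finset.orderEmbOfFin_apply] at h3
        have h4 : k - 1 - (k - 1 - i) = i := by omega
        rw [h4] at h3
        exact h3.symm
      · rw [gf_of_ge hk (by omega), Sf_of_le m (by omega)]
    funext i
    simp only [mf, hgT]
    have h5 := Sf_succ m i.isLt
    have h6 : m ⟨(i : ℕ), i.isLt⟩ = m i := congrArg m (Fin.eta i i.isLt)
    rw [h6] at h5
    omega
  -- right inverse
  · intro S hSt
    beta_reduce
    rw [Finset.mem_powersetCard] at hSt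
    obtain ⟨hsub, hcard⟩ := hSt
    have hsf := Sf_mf (S := S) hn hk hsub hcard
    have hlen : (S.sort (· ≤ ·)).length = k - 1 := by simp [hcard]
    ext a
    simp only [Finset.mem_image, Finset.mem_Ico]
    constructor
    · rintro ⟨i, ⟨h1, h2⟩, rfl⟩
      rw [hsf i]
      exact gf_mem (n := n) hcard h1 (by omega)
    · intro haS
      have ha' : a ∈ S.sort (· ≤ ·) := (Finset.mem_sort _).mpr haS
      obtain ⟨j, hj, rfl⟩ := List.getElem_of_mem ha'
      refine ⟨k - 1 - j, ⟨by omega, by omega⟩, ?_⟩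
      rw [hsf, gf_eq_get hcard (by omega) (by omega) (by omega)]
      have h6 : k - 1 - (k - 1 - j) = j := by omega
      simp only [h6]
  -- term equality
  · intro m hm
    obtain ⟨-, hsum, hone, hlast⟩ := Finset.mem_filter.mp hm
    have hS0 : Sf k m 0 = n := by rw [Sf_zero]; exact hsum
    have hSlast : 2 ≤ Sf k m (k - 1) := by
      rw [Sf_succ m (show k - 1 < k by omega), Sf_of_le m (show k ≤ k - 1 + 1 by omega)]
      simpa using hlast
    have hge2 : ∀ i, i ≤ k - 1 → 2 ≤ Sf k m i := fun i hi => le_trans hSlast (Sf_anti m hi)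
    have hinj : ∀ a ∈ Finset.Ico 1 k, ∀ b ∈ Finset.Ico 1 k, Sf k m a = Sf k m b → a = b := by
      intro a ha b hb hab
      rw [Finset.mem_Ico] at ha hb
      by_contra hne
      rcases Nat.lt_or_ge a b with h | h
      · have := Sf_lt hone h (by omega); omega
      · have := Sf_lt hone (show b < a by omega) (by omega); omega
    rw [Finset.prod_image hinj]
    have hrw : ∀ i, (∑ j ∈ Finset.univ.filter (fun j : Fin k => i ≤ (j : ℕ)), m j) = Sf k m i :=
      fun _ => rfl
    simp only [hrw]
    have hfac : (∏ i : Fin k, ((Nat.factorial (m i - 1) : ℕ) : ℚ)) *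
        (∏ i : Fin k, (m i : ℚ)) = ∏ i : Fin k, ((Nat.factorial (m i) : ℕ) : ℚ) := by
      rw [← Finset.prod_mul_distrib]
      refine Finset.prod_congr rfl fun i _ => ?_
      rw [mul_comm, ← Nat.cast_mul, Nat.mul_factorial_pred (by have := hone i; omega)]
    have hQpos : (0 : ℚ) < ∏ i ∈ Finset.Ico 1 k, ((Sf k m i : ℕ) : ℚ) := by
      apply Finset.prod_pos
      intro i hi
      rw [Finset.mem_Ico] at hi
      have := hge2 i (by omega)
      positivity
    have hsplit : (∏ i ∈ Finset.range k, ((Sf k m i : ℕ) : ℚ)) =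
        (n : ℚ) * ∏ i ∈ Finset.Ico 1 k, ((Sf k m i : ℕ) : ℚ) := by
      rw [Finset.range_eq_Ico, Finset.prod_eq_prod_Ico_succ_bot (by omega : 0 < k), hS0]
    have hCpos : (0 : ℚ) < ∏ i : Fin k, ((Nat.factorial (m i) : ℕ) : ℚ) := by
      apply Finset.prod_pos
      intro i _
      exact_mod_cast Nat.factorial_pos (m i)
    have hnf : ((Nat.factorial n : ℕ) : ℚ) = (n : ℚ) * ((Nat.factorial (n - 1) : ℕ) : ℚ) := by
      rw [← Nat.cast_mul, Nat.mul_factorial_pred (by omega : n ≠ 0)]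
    have hrhs : (∏ i ∈ Finset.Ico 1 k, (1 / ((Sf k m i : ℕ) : ℚ))) =
        1 / ∏ i ∈ Finset.Ico 1 k, ((Sf k m i : ℕ) : ℚ) := by
      rw [Finset.prod_div_distrib, Finset.prod_const_one]
    rw [hfac, hsplit, hnf, hrhs]
    have hQ0 : (∏ i ∈ Finset.Ico 1 k, ((Sf k m i : ℕ) : ℚ)) ≠ 0 := ne_of_gt hQpos
    have hC0 : (∏ i : Fin k, ((Nat.factorial (m i) : ℕ) : ℚ)) ≠ 0 := ne_of_gt hCpos
    have hn0 : (n : ℚ) ≠ 0 := by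
      have : (0:ℚ) < (n:ℚ) := by exact_mod_cast (show 0 < n by omega)
      exact ne_of_gt this
    field_simp
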